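/- Let K be a field of characteristic 0 and d ≥ 2, e with 0 < e < d. Every GL(V)-equivariant bilinear map α: Sᵉ(V) × S^{d−e}(V) → S^d(V), defined naturally in V (i.e., a bilinear polynomial transformation), is a scalar multiple of the multiplication map (g,h) ↦ g·h. -/

import Mathlib

open MvPolynomial Finset

namespace Stmt8Aux

variable {K : Type*} [Field K] [CharZero K]

noncomputable def lin {n : ℕ} (a : Fin n → K) : MvPolynomial (Fin n) K := ∑ i, a i • X i

omit [CharZero K] in
lemma lin_add_smul {n : ℕ} (m a : Fin n → K) (s : K) :
    lin (m + s • a) = lin m + s • lin a := by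
  simp only [lin, Pi.add_apply, Pi.smul_apply, smul_eq_mul, add_smul, mul_smul,
    Finset.sum_add_distrib, Finset.smul_sum]

omit [CharZero K] in
lemma lin_single {n : ℕ} (i : Fin n) : lin (Pi.single i (1 : K)) = X i := by
  simp [lin, Pi.single_apply, ite_smul]

lemma degree_univ {n : ℕ} (u : Fin n →₀ ℕ) : u.degree = ∑ i, u i :=
  Finset.sum_subset (Finset.subset_univ _)
    (fun i _ h => Finsupp.notMem_support_iff.mp h)

lemma vand_extract {M : Type*} [AddCommGroup M] [Module K M] (S : Submodule K M)
    {N : ℕ} (v : Fin (N + 1) → M)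
    (h : ∀ s : K, (∑ k : Fin (N + 1), s ^ (k : ℕ) • v k) ∈ S) (k : Fin (N + 1)) : v k ∈ S := by
  classical
  set A : Matrix (Fin (N + 1)) (Fin (N + 1)) K :=
    Matrix.vandermonde (fun i => ((i : ℕ) : K)) with hA
  have hdet : IsUnit A.det := by
    rw [hA, Matrix.det_vandermonde]
    rw [isUnit_iff_ne_zero]
    apply Finset.prod_ne_zero_iff.mpr
    intro i _
    apply Finset.prod_ne_zero_iff.mpr
    intro j hj
    have hij : i < j := Finset.mem_Ioi.mp hj
    have : ((i : ℕ) : K) ≠ ((j : ℕ) : K) := by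
      simp only [ne_eq, Nat.cast_inj]
      omega
    exact sub_ne_zero_of_ne this.symm
  have hinv : A⁻¹ * A = 1 := Matrix.nonsing_inv_mul A hdet
  have key : v k = ∑ i, A⁻¹ k i • ∑ j, A i j • v j := by
    have h1 : ∀ i, A⁻¹ k i • ∑ j, A i j • v j = ∑ j, (A⁻¹ k i * A i j) • v j := by
      intro i
      rw [Finset.smul_sum]
      simp_rw [smul_smul]
    simp_rw [h1]
    rw [Finset.sum_comm]
    have h2 : ∀ j, (∑ i, (A⁻¹ k i * A i j) • v j) = (A⁻¹ * A) k j • v j := by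
      intro j
      rw [← Finset.sum_smul, Matrix.mul_apply]
    simp_rw [h2, hinv]
    simp [Matrix.one_apply, ite_smul]
  rw [key]
  refine Submodule.sum_mem _ fun i _ => Submodule.smul_mem _ _ ?_
  have := h ((i : ℕ) : K)
  simpa [hA, Matrix.vandermonde_apply] using this

lemma monomial_mul_mem_span {n e : ℕ} :
    ∀ (j : ℕ) (u : Fin n →₀ ℕ), u.degree = j → j ≤ e → ∀ m : Fin n → K,
      (monomial u (1 : K)) * lin m ^ (e - j) ∈
        Submodule.span K (Set.range fun a : Fin n → K => lin a ^ e) := by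
  intro j
  induction j with
  | zero =>
    intro u hu _ m
    have hu0 : u = 0 := (Finsupp.degree_eq_zero_iff u).mp hu
    subst hu0
    rw [monomial_zero', map_one, one_mul, Nat.sub_zero]
    exact Submodule.subset_span ⟨m, rfl⟩
  | succ j ih =>
    intro u hu hje m
    set Sp := Submodule.span K (Set.range fun a : Fin n → K => lin a ^ e) with hSp
    have hu0 : u ≠ 0 := by
      intro h0
      rw [h0, map_zero] at hu
      omega
    obtain ⟨i, hi⟩ : ∃ i, u i ≠ 0 := by
      by_contra hcon
      push_neg at hcon
      exact hu0 (Finsupp.ext fun i => hcon i)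
    set u' := u - Finsupp.single i 1 with hu'
    have hle : Finsupp.single i 1 ≤ u := by
      rw [Finsupp.single_le_iff]
      omega
    have hsum : u' + Finsupp.single i 1 = u := tsub_add_cancel_of_le hle
    have hdegsum : u.degree = u'.degree + 1 := by
      rw [← hsum, degree_univ, degree_univ]
      simp only [Finsupp.add_apply, Finset.sum_add_distrib]
      congr 1
      simp [Finsupp.single_apply]
    have hdeg' : u'.degree = j := by omega
    set q := monomial u' (1 : K) with hq
    obtain ⟨N, hN⟩ : ∃ N, e - j = N + 1 := ⟨e - j - 1, by omega⟩
    set r := e - j with hr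
    -- the polynomial identity
    have main : ∀ s : K,
        (∑ k : Fin (N + 1 + 1), s ^ (k : ℕ) •
          (((r.choose (k : ℕ) : K)) • (q * (X i ^ (k : ℕ) * lin m ^ (r - (k : ℕ)))))) ∈ Sp := by
      intro s
      have h1 := ih u' hdeg' (by omega) (m + s • (Pi.single i (1 : K) : Fin n → K))
      rw [lin_add_smul, lin_single] at h1
      have hexp : q * (lin m + s • X i) ^ r
          = ∑ k : Fin (N + 1 + 1), s ^ (k : ℕ) •
            (((r.choose (k : ℕ) : K)) • (q * (X i ^ (k : ℕ) * lin m ^ (r - (k : ℕ))))) := by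
        rw [add_comm (lin m), add_pow, Finset.mul_sum]
        rw [← hN, Fin.sum_univ_eq_sum_range
          (fun k => s ^ k • (((r.choose k : K)) • (q * (X i ^ k * lin m ^ (r - k)))))]
        apply Finset.sum_congr rfl
        intro k _
        rw [smul_pow, smul_eq_C_mul, smul_eq_C_mul, smul_eq_C_mul,
          ← map_natCast (C : K →+* MvPolynomial (Fin n) K) (r.choose k)]
        ring
      rw [← hexp]
      have : e - j = r := rfl
      exact this ▸ h1
    have h2 := vand_extract Sp _ main ⟨1, by omega⟩
    simp only [Nat.choose_one_right, pow_one] at h2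
    -- h2 : (r : K) • (q * (X i ^ 1 * lin m ^ (r - 1))) ∈ Sp
    have hrK : (r : K) ≠ 0 := by
      have h1r : r ≠ 0 := by omega
      exact Nat.cast_ne_zero.mpr h1r
    have h3 : q * (X i * lin m ^ (r - 1)) ∈ Sp := by
      have := Sp.smul_mem (r : K)⁻¹ h2
      rwa [smul_smul, inv_mul_cancel₀ hrK, one_smul] at this
    have hXi : (X i : MvPolynomial (Fin n) K) = monomial (Finsupp.single i 1) 1 := by
      rw [← X_pow_eq_monomial, pow_one]
    have hqX : q * X i = monomial u (1 : K) := by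
      rw [hq, hXi, monomial_mul, hsum, one_mul]
    have hfinal : monomial u (1 : K) * lin m ^ (e - (j + 1))
        = q * (X i * lin m ^ (r - 1)) := by
      rw [← hqX, show e - (j + 1) = r - 1 from by omega]
      ring
    rw [hfinal]
    exact h3

lemma isHomogeneous_mem_span {n e : ℕ} {p : MvPolynomial (Fin n) K}
    (hp : p.IsHomogeneous e) :
    p ∈ Submodule.span K (Set.range fun a : Fin n → K => lin a ^ e) := by
  nth_rewrite 1 [p.as_sum]
  apply Submodule.sum_mem
  intro u hu
  have hcoeff : coeff u p ≠ 0 := mem_support_iff.mp hu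
  have hdeg : u.degree = e := by
    rw [Finsupp.degree_eq_weight_one]
    exact hp hcoeff
  have hmem := monomial_mul_mem_span (K := K) e u hdeg le_rfl 0
  rw [Nat.sub_self, pow_zero, mul_one] at hmem
  have h2 : monomial u (coeff u p) = coeff u p • monomial u (1 : K) := by
    rw [smul_monomial, smul_eq_mul, mul_one]
  rw [h2]
  exact Submodule.smul_mem _ _ hmem

lemma aeval_scale {n : ℕ} (t : Fin n → K) (u : Fin n →₀ ℕ) (b : K) :
    aeval (fun i => t i • (X i : MvPolynomial (Fin n) K)) (monomial u b)
      = (∏ i, t i ^ u i) • monomial u b := by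
  rw [aeval_monomial]
  have h1 : (u.prod fun i k => (t i • (X i : MvPolynomial (Fin n) K)) ^ k)
      = (∏ i ∈ u.support, t i ^ u i) • ∏ i ∈ u.support, (X i : MvPolynomial (Fin n) K) ^ u i := by
    rw [Finsupp.prod]
    simp_rw [smul_pow, smul_eq_C_mul]
    rw [Finset.prod_mul_distrib, ← map_prod, ← smul_eq_C_mul]
  have h2 : ∏ i ∈ u.support, t i ^ u i = ∏ i, t i ^ u i :=
    Finset.prod_subset (Finset.subset_univ _)
      (fun i _ h => by rw [Finsupp.notMem_support_iff.mp h, pow_zero])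
  rw [h1, h2, prod_X_pow_eq_monomial, mul_smul_comm, algebraMap_eq, C_mul_monomial, mul_one]

lemma coeff_aeval_scale {n : ℕ} (t : Fin n → K) (p : MvPolynomial (Fin n) K) (u : Fin n →₀ ℕ) :
    coeff u (aeval (fun i => t i • (X i : MvPolynomial (Fin n) K)) p)
      = (∏ i, t i ^ u i) * coeff u p := by
  conv_lhs => rw [p.as_sum]
  rw [map_sum]
  rw [coeff_sum]
  simp_rw [aeval_scale, coeff_smul, smul_eq_mul]
  rcases em (u ∈ p.support) with hu | hu
  · rw [Finset.sum_eq_single u]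
    · rw [coeff_monomial, if_pos rfl]
    · intro v _ hv
      rw [coeff_monomial, if_neg hv, mul_zero]
    · intro h
      exact absurd hu h
  · rw [Finset.sum_eq_zero, MvPolynomial.notMem_support_iff.mp hu, mul_zero]
    intro v hv
    rw [coeff_monomial, if_neg (by rintro rfl; exact hu hv), mul_zero]

end Stmt8Aux

open Stmt8Aux

/-- Every bilinear polynomial transformation `Sᵉ ⊕ S^{d-e} → S^d` (a family of bilinear maps
on homogeneous polynomials, natural in the vector space, i.e. commuting with all linear
substitutions of variables) is a scalar multiple of the multiplication map. -/
theorem stmt8 (K : Type*) [Field K] [CharZero K] (d e : ℕ) (hd : 2 ≤ d) (he : 0 < e)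
    (hed : e < d)
    (α : ∀ n : ℕ, MvPolynomial (Fin n) K →ₗ[K] MvPolynomial (Fin n) K →ₗ[K]
        MvPolynomial (Fin n) K)
    (hhom : ∀ (n : ℕ) (g h : MvPolynomial (Fin n) K),
        g.IsHomogeneous e → h.IsHomogeneous (d - e) → (α n g h).IsHomogeneous d)
    (hnat : ∀ (n m : ℕ) (C : Matrix (Fin m) (Fin n) K) (g h : MvPolynomial (Fin n) K),
        g.IsHomogeneous e → h.IsHomogeneous (d - e) →
        aeval (fun j : Fin n => ∑ i : Fin m, C i j • (X i : MvPolynomial (Fin m) K)) (α n g h)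
          = α m (aeval (fun j : Fin n => ∑ i : Fin m, C i j • (X i : MvPolynomial (Fin m) K)) g)
                (aeval (fun j : Fin n => ∑ i : Fin m, C i j • (X i : MvPolynomial (Fin m) K)) h)) :
    ∃ c : K, ∀ (n : ℕ) (g h : MvPolynomial (Fin n) K),
      g.IsHomogeneous e → h.IsHomogeneous (d - e) → α n g h = c • (g * h) := by
  classical
  set u₀ : Fin 2 →₀ ℕ := Finsupp.single 0 e + Finsupp.single 1 (d - e) with hu₀
  have hu₀0 : u₀ 0 = e := by
    simp [hu₀, Finsupp.single_apply]
  have hu₀1 : u₀ 1 = d - e := by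
    simp [hu₀, Finsupp.single_apply]
  have hXe : (X 0 ^ e : MvPolynomial (Fin 2) K).IsHomogeneous e := isHomogeneous_X_pow _ _
  have hXde : (X 1 ^ (d - e) : MvPolynomial (Fin 2) K).IsHomogeneous (d - e) :=
    isHomogeneous_X_pow _ _
  set p : MvPolynomial (Fin 2) K := α 2 (X 0 ^ e) (X 1 ^ (d - e)) with hp
  have hphom : p.IsHomogeneous d := by
    have := hhom 2 _ _ hXe hXde
    rwa [← hp] at this
  set c : K := coeff u₀ p with hc
  -- the scaling identity
  have scale : ∀ t : K, ∀ u : Fin 2 →₀ ℕ, t ^ (u 0) * coeff u p = t ^ e * coeff u p := by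
    intro t u
    set tv : Fin 2 → K := ![t, 1] with htv
    have hsub : (fun j : Fin 2 => ∑ i : Fin 2,
        (Matrix.diagonal tv) i j • (X i : MvPolynomial (Fin 2) K))
        = fun j => tv j • X j := by
      funext j
      rw [Finset.sum_eq_single j]
      · rw [Matrix.diagonal_apply_eq]
      · intro i _ hij
        rw [Matrix.diagonal_apply_ne _ hij, zero_smul]
      · intro hj
        exact absurd (Finset.mem_univ j) hj
    have hnat2 := hnat 2 2 (Matrix.diagonal tv) (X 0 ^ e) (X 1 ^ (d - e)) hXe hXde
    rw [hsub] at hnat2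
    have e1 : aeval (R := K) (fun j => tv j • (X j : MvPolynomial (Fin 2) K))
        ((X 0 : MvPolynomial (Fin 2) K) ^ e) = t ^ e • X 0 ^ e := by
      rw [map_pow, aeval_X, smul_pow]
      simp [htv]
    have e2 : aeval (R := K) (fun j => tv j • (X j : MvPolynomial (Fin 2) K))
        ((X 1 : MvPolynomial (Fin 2) K) ^ (d - e)) = X 1 ^ (d - e) := by
      rw [map_pow, aeval_X]
      have : tv 1 = 1 := by simp [htv]
      rw [this, one_smul]
    rw [e1, e2, map_smul, LinearMap.smul_apply, ← hp] at hnat2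
    have := congrArg (coeff u) hnat2
    rw [coeff_smul, smul_eq_mul, coeff_aeval_scale] at this
    have hprod : (∏ i, tv i ^ u i) = t ^ (u 0) := by
      rw [Fin.prod_univ_two]
      simp [htv]
    rw [hprod] at this
    exact this
  -- support of p is {u₀}
  have hsupp : ∀ u : Fin 2 →₀ ℕ, coeff u p ≠ 0 → u = u₀ := by
    intro u hcu
    have h0 : u 0 = e := by
      have h2 := scale 2 u
      have h2' : (2 : K) ^ (u 0) = 2 ^ e := mul_right_cancel₀ hcu h2
      have h2n : (2 : ℕ) ^ (u 0) = 2 ^ e := by exact_mod_cast h2'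
      exact Nat.pow_right_injective le_rfl h2n
    have hsum : u 0 + u 1 = d := by
      have hw := hphom hcu
      rw [show (Finsupp.weight 1) u = u.degree from congrArg (· u) Finsupp.degree_eq_weight_one.symm, degree_univ, Fin.sum_univ_two] at hw
      exact hw
    ext i
    fin_cases i
    · show u 0 = u₀ 0
      rw [h0]; exact hu₀0.symm
    · show u 1 = u₀ 1
      rw [show u 1 = d - e by omega]; exact hu₀1.symm
  have hpeq : p = c • (X 0 ^ e * X 1 ^ (d - e)) := by
    have hm : (X 0 ^ e * X 1 ^ (d - e) : MvPolynomial (Fin 2) K) = monomial u₀ 1 := by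
      rw [X_pow_eq_monomial, X_pow_eq_monomial, monomial_mul, one_mul, hu₀]
    rw [hm, smul_monomial, smul_eq_mul, mul_one]
    apply MvPolynomial.ext
    intro u
    rw [coeff_monomial]
    split_ifs with h
    · rw [← h]
    · by_contra hne
      exact h (hsupp u (fun h0 => hne (by rw [h0]))).symm
  -- the key identity for powers of linear forms
  have key4 : ∀ (n : ℕ) (a b : Fin n → K),
      α n (lin a ^ e) (lin b ^ (d - e)) = c • (lin a ^ e * lin b ^ (d - e)) := by
    intro n a b
    set Cab : Matrix (Fin n) (Fin 2) K := fun i j => ![a, b] j i with hCab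
    have hnat' := hnat 2 n Cab (X 0 ^ e) (X 1 ^ (d - e)) hXe hXde
    have hsub : (fun j : Fin 2 => ∑ i : Fin n, Cab i j • (X i : MvPolynomial (Fin n) K))
        = fun j => lin (![a, b] j) := rfl
    rw [hsub, ← hp, hpeq] at hnat'
    have f1 : aeval (R := K) (fun j : Fin 2 => lin (![a, b] j))
        ((X 0 : MvPolynomial (Fin 2) K) ^ e) = lin a ^ e := by
      rw [map_pow, aeval_X, Matrix.cons_val_zero]
    have f2 : aeval (R := K) (fun j : Fin 2 => lin (![a, b] j))
        ((X 1 : MvPolynomial (Fin 2) K) ^ (d - e)) = lin b ^ (d - e) := by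
      rw [map_pow, aeval_X, Matrix.cons_val_one, Matrix.cons_val_zero]
    have f3 : aeval (R := K) (fun j : Fin 2 => lin (![a, b] j))
        (c • ((X 0 : MvPolynomial (Fin 2) K) ^ e * X 1 ^ (d - e)))
        = c • (lin a ^ e * lin b ^ (d - e)) := by
      rw [smul_eq_C_mul, map_mul, aeval_C, map_mul, f1, f2, algebraMap_eq, ← smul_eq_C_mul]
    rw [f3, f1, f2] at hnat'
    exact hnat'.symm
  refine ⟨c, fun n g h hg hh => ?_⟩
  have hgspan := isHomogeneous_mem_span (K := K) hg
  have hhspan := isHomogeneous_mem_span (K := K) hh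
  have stepA : ∀ (x : MvPolynomial (Fin n) K),
      x ∈ Submodule.span K (Set.range fun a : Fin n → K => lin a ^ e) →
      ∀ b : Fin n → K, α n x (lin b ^ (d - e)) = c • (x * lin b ^ (d - e)) := by
    intro x hx
    induction hx using Submodule.span_induction with
    | mem y hy =>
      obtain ⟨a, rfl⟩ := hy
      intro b
      exact key4 n a b
    | zero =>
      intro b
      simp
    | add y z hy hz ihy ihz =>
      intro b
      rw [map_add, LinearMap.add_apply, ihy b, ihz b, add_mul, smul_add]
    | smul a y hy ihy =>
      intro b
      rw [map_smul, LinearMap.smul_apply, ihy b, smul_mul_assoc]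
      exact smul_comm _ _ _
  have stepB : ∀ (y : MvPolynomial (Fin n) K),
      y ∈ Submodule.span K (Set.range fun b : Fin n → K => lin b ^ (d - e)) →
      α n g y = c • (g * y) := by
    intro y hy
    induction hy using Submodule.span_induction with
    | mem y hy =>
      obtain ⟨b, rfl⟩ := hy
      exact stepA g hgspan b
    | zero => simp
    | add y z hy hz ihy ihz => rw [map_add, ihy, ihz, mul_add, smul_add]
    | smul a y hy ihy =>
      rw [map_smul, ihy, mul_smul_comm]
      exact smul_comm _ _ _
  exact stepB h hhspan
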